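/- Let Γ be a finitely generated group. If the Cayley graph of Γ with respect to some finite generating set has polynomial containment of degree at most d for some non-negative integer d, then that Cayley graph is amenable, i.e., its Cheeger constant is zero. -/

import Mathlib

universe u

/-- A map between the vertex sets of two graphs (each vertex set carrying the combinatorial
metric `SimpleGraph.dist`) is a quasi-isometry. -/
def GraphQuasiIsometry {V : Type*} {V' : Type*} (G : SimpleGraph V) (G' : SimpleGraph V')
    (f : V → V') : Prop :=
  ∃ lam ε K : ℝ, 1 ≤ lam ∧ 0 ≤ ε ∧ 0 ≤ K ∧
    (∀ x y : V,
      lam⁻¹ * (G.dist x y : ℝ) - ε ≤ (G'.dist (f x) (f y) : ℝ) ∧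
      (G'.dist (f x) (f y) : ℝ) ≤ lam * (G.dist x y : ℝ) + ε) ∧
    (∀ v' : V', ∃ x : V, (G'.dist v' (f x) : ℝ) ≤ K)

/-- Two graphs are quasi-isometric (with their combinatorial metrics). -/
def QuasiIsometric {V V' : Type*} (G : SimpleGraph V) (G' : SimpleGraph V') : Prop :=
  ∃ f : V → V', GraphQuasiIsometry G G' f

/-- `G` has polynomial containment of degree at most `d`. -/
def HasPolyContainment {V : Type*} (G : SimpleGraph V) (d : ℕ) : Prop :=
  ∃ C : ℝ, 0 < C ∧
    ∀ X₀ : Set V, X₀.Finite →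
      ∃ (W : ℕ → Set V) (X : ℕ → Set V),
        X 0 = X₀ ∧
        (∀ n : ℕ, 1 ≤ n → (W n).Finite ∧ ((W n).ncard : ℝ) ≤ C * (n : ℝ) ^ d) ∧
        (∀ n : ℕ, X (n + 1) =
          {v : V | ∃ u ∈ X n, v = u ∨ G.Adj u v} \ (⋃ k ∈ Finset.Icc 1 (n + 1), W k)) ∧
        (∀ n : ℕ, Disjoint (X n) (W (n + 1))) ∧
        (∃ T : ℕ, 0 < T ∧ ∀ n : ℕ, T ≤ n → X n = X T)

/-- `G` has all vertex degrees bounded above by some `D`. -/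
def BoundedDegree {V : Type*} (G : SimpleGraph V) : Prop :=
  ∃ D : ℕ, ∀ v : V, (G.neighborSet v).Finite ∧ (G.neighborSet v).ncard ≤ D

/-- Number of vertices at distance at most `n` from the base vertex `g₀`. -/
noncomputable def growthFunction {V : Type*} (G : SimpleGraph V) (g₀ : V) (n : ℕ) : ℕ :=
  {v : V | G.dist g₀ v ≤ n}.ncard

/-- Edges of `G` with exactly one endpoint in `K`. -/
def edgeBoundary {V : Type*} (G : SimpleGraph V) (K : Set V) : Set (Sym2 V) :=
  {e ∈ G.edgeSet | ∃ u v : V, e = s(u, v) ∧ u ∈ K ∧ v ∉ K}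

/-- Cheeger constant of a graph. -/
noncomputable def cheegerConstant {V : Type*} (G : SimpleGraph V) : ℝ :=
  sInf {r : ℝ | ∃ K : Set V, K.Finite ∧ K.Nonempty ∧
    r = ((edgeBoundary G K).ncard : ℝ) / (K.ncard : ℝ)}

/-- Cayley graph of a group with respect to a set `S`. -/
def cayleyGraph (Γ : Type*) [Group Γ] (S : Set Γ) : SimpleGraph Γ :=
  SimpleGraph.fromRel (fun g h => ∃ s ∈ S, h = g * s)

/-- Word length of `g` with respect to `S`. -/
noncomputable def wordLength {Γ : Type*} [Group Γ] (S : Set Γ) (g : Γ) : ℕ :=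
  sInf {n : ℕ | ∃ l : List Γ, l.length = n ∧ (∀ x ∈ l, x ∈ S ∪ S⁻¹) ∧ l.prod = g}

def VirtuallyNilpotent (Γ : Type*) [Group Γ] : Prop :=
  ∃ H : Subgroup Γ, H.FiniteIndex ∧ Group.IsNilpotent H

/-- The infinite `δ`-regular tree. -/
def IsRegularTree {U : Type*} (T : SimpleGraph U) (δ : ℕ) : Prop :=
  Infinite U ∧ T.IsTree ∧ ∀ v : U, (T.neighborSet v).Finite ∧ (T.neighborSet v).ncard = δ

/-- `a` and `b` generate a free semigroup of rank two. -/
def GeneratesFreeSemigroup {Γ : Type*} [Group Γ] (a b : Γ) : Prop :=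
  Function.Injective
    (FreeSemigroup.lift (fun x : Bool => if x then a else b) : FreeSemigroup Bool →ₙ* Γ)

/-- Elementary amenable groups: the smallest class containing finite and abelian groups and
closed under subgroups, quotients, extensions and directed unions. -/
inductive ElementaryAmenable : (G : Type u) → [inst : Group G] → Prop
  | finite (G : Type u) [Group G] [Finite G] : ElementaryAmenable G
  | abelian (G : Type u) [Group G] (h : ∀ a b : G, a * b = b * a) : ElementaryAmenable G
  | subgroup {G H : Type u} [Group G] [Group H] (f : H →* G) (hf : Function.Injective f)
      (hG : ElementaryAmenable G) : ElementaryAmenable H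
  | quotient {G H : Type u} [Group G] [Group H] (f : G →* H) (hf : Function.Surjective f)
      (hG : ElementaryAmenable G) : ElementaryAmenable H
  | extension {G : Type u} [Group G] (N : Subgroup G) [N.Normal]
      (hN : ElementaryAmenable N) (hQ : ElementaryAmenable (G ⧸ N)) : ElementaryAmenable G
  | directedUnion {G : Type u} [Group G] {ι : Type u} (H : ι → Subgroup G)
      (hdir : ∀ i j, ∃ k, H i ≤ H k ∧ H j ≤ H k)
      (hunion : ∀ g : G, ∃ i, g ∈ H i)
      (hEA : ∀ i, ElementaryAmenable (H i)) : ElementaryAmenable G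

/-- if the Cayley graph of a finitely generated group has polynomial containment
of degree at most `d` for some `d`, then the Cayley graph is amenable. -/
/- ### auxiliary lemmas -/

lemma aux_ncard_biUnion_le_sum {ι α : Type*} (t : Finset ι) (f : ι → Set α) :
    (⋃ i ∈ t, f i).ncard ≤ ∑ i ∈ t, (f i).ncard := by
  classical
  induction t using Finset.induction_on with
  | empty => simp
  | @insert a s ha ih =>
    rw [Finset.set_biUnion_insert, Finset.sum_insert ha]
    exact (Set.ncard_union_le _ _).trans (Nat.add_le_add_left ih _)

lemma aux_cayley_nbhd {Γ : Type*} [Group Γ] (S : Set Γ) {u v : Γ}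
    (h : (cayleyGraph Γ S).Adj u v) : v ∈ (fun s => u * s) '' (S ∪ S⁻¹) := by
  rcases h with ⟨hne, h | h⟩
  · rcases h with ⟨s, hs, rfl⟩; exact ⟨s, Or.inl hs, rfl⟩
  · rcases h with ⟨s, hs, hv⟩
    exact ⟨s⁻¹, Or.inr (by simpa using hs), by rw [hv]; group⟩

theorem cayley_polyContainment_implies_amenable {Γ : Type u} [Group Γ]
    (S : Set Γ) (hS : S.Finite) (hgen : Subgroup.closure S = ⊤)
    (d : ℕ) (h : HasPolyContainment (cayleyGraph Γ S) d) :
    cheegerConstant (cayleyGraph Γ S) = 0 := by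
  classical
  set G := cayleyGraph Γ S with hGdef
  set R : Set ℝ := {r : ℝ | ∃ K : Set Γ, K.Finite ∧ K.Nonempty ∧
      r = ((edgeBoundary G K).ncard : ℝ) / (K.ncard : ℝ)} with hRdef
  have hch : cheegerConstant G = sInf R := rfl
  have hRnonneg : ∀ r ∈ R, (0:ℝ) ≤ r := by
    rintro r ⟨K, hKf, hKne, rfl⟩
    positivity
  have hBdd : BddBelow R := ⟨0, hRnonneg⟩
  have hRne : R.Nonempty :=
    ⟨_, ⟨{1}, Set.finite_singleton 1, Set.singleton_nonempty 1, rfl⟩⟩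
  have h0 : 0 ≤ cheegerConstant G := hch ▸ le_csInf hRne hRnonneg
  rcases h0.eq_or_lt with heq | hpos
  · exact heq.symm
  exfalso
  cases finite_or_infinite Γ with
  | inl hfinΓ =>
    have hzero : (0:ℝ) ∈ R := by
      refine ⟨Set.univ, Set.finite_univ, ⟨1, trivial⟩, ?_⟩
      have hemp : edgeBoundary G Set.univ = ∅ := by
        ext e
        simp [edgeBoundary]
      rw [hemp]
      simp
    have := csInf_le hBdd hzero
    rw [← hch] at this
    linarith
  | inr hinfΓ =>
    -- degree bound
    have hSfin : (S ∪ S⁻¹).Finite := hS.union hS.inv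
    set D : ℝ := ((S ∪ S⁻¹).ncard : ℝ) + 1 with hDdef
    have hD : 0 < D := by positivity
    have hnbfin : ∀ u : Γ, (G.neighborSet u).Finite := fun u =>
      (hSfin.image _).subset (fun v hv => aux_cayley_nbhd S hv)
    have hnbcard : ∀ u : Γ, ((G.neighborSet u).ncard : ℝ) ≤ D := by
      intro u
      have h1 : (G.neighborSet u).ncard ≤ ((fun s => u * s) '' (S ∪ S⁻¹)).ncard :=
        Set.ncard_le_ncard (fun v hv => aux_cayley_nbhd S hv) (hSfin.image _)
      have h2 : ((fun s => u * s) '' (S ∪ S⁻¹)).ncard ≤ (S ∪ S⁻¹).ncard :=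
        Set.ncard_image_le hSfin
      have h3 : (((G.neighborSet u).ncard : ℕ) : ℝ) ≤ (((S ∪ S⁻¹).ncard : ℕ) : ℝ) := by
        exact_mod_cast h1.trans h2
      rw [hDdef]; linarith
    set Nbd : Set Γ → Set Γ := fun K => {v : Γ | ∃ u ∈ K, v = u ∨ G.Adj u v} with hNbddef
    have hKsubNbd : ∀ K : Set Γ, K ⊆ Nbd K := fun K u hu => ⟨u, hu, Or.inl rfl⟩
    have hNbdfin : ∀ K : Set Γ, K.Finite → (Nbd K).Finite := by
      intro K hKf
      have hsub : Nbd K ⊆ ⋃ u ∈ K, ({u} ∪ G.neighborSet u) := by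
        rintro v ⟨u, hu, rfl | hadj⟩
        · exact Set.mem_biUnion hu (Or.inl rfl)
        · exact Set.mem_biUnion hu (Or.inr hadj)
      exact ((hKf.biUnion (fun u _ => (Set.finite_singleton u).union (hnbfin u)))).subset hsub
    -- key expansion estimate
    have key : ∀ K : Set Γ, K.Finite → K.Nonempty →
        cheegerConstant G * (K.ncard : ℝ) ≤ D * ((Nbd K \ K).ncard : ℝ) := by
      intro K hKf hKne
      have hKpos : (0:ℝ) < (K.ncard : ℝ) := by
        exact_mod_cast (Set.ncard_pos hKf).mpr hKne
      have h1 : cheegerConstant G ≤ ((edgeBoundary G K).ncard : ℝ) / (K.ncard : ℝ) :=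
        hch ▸ csInf_le hBdd ⟨K, hKf, hKne, rfl⟩
      have h2 : cheegerConstant G * (K.ncard : ℝ) ≤ ((edgeBoundary G K).ncard : ℝ) := by
        rw [← le_div_iff₀ hKpos]; exact h1
      refine h2.trans ?_
      set M := Nbd K \ K with hM
      have hMfin : M.Finite := (hNbdfin K hKf).diff
      have hsub : edgeBoundary G K ⊆
          ⋃ v ∈ hMfin.toFinset, (fun u => s(u, v)) '' (G.neighborSet v) := by
        rintro e ⟨he, u, v, rfl, hu, hv⟩
        have hadj : G.Adj u v := G.mem_edgeSet.mp he
        have hvM : v ∈ M := ⟨⟨u, hu, Or.inr hadj⟩, hv⟩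
        exact Set.mem_biUnion (hMfin.mem_toFinset.mpr hvM) ⟨u, hadj.symm, rfl⟩
      have hcount : (edgeBoundary G K).ncard ≤
          ∑ v ∈ hMfin.toFinset, ((fun u => s(u, v)) '' (G.neighborSet v)).ncard := by
        refine (Set.ncard_le_ncard hsub ?_).trans (aux_ncard_biUnion_le_sum _ _)
        exact Set.Finite.biUnion (Finset.finite_toSet _) (fun v _ => (hnbfin v).image _)
      have hcast : ((edgeBoundary G K).ncard : ℝ) ≤
          ∑ v ∈ hMfin.toFinset, (((fun u => s(u, v)) '' (G.neighborSet v)).ncard : ℝ) := by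
        exact_mod_cast hcount
      refine hcast.trans ?_
      have hterm : ∀ v ∈ hMfin.toFinset,
          (((fun u => s(u, v)) '' (G.neighborSet v)).ncard : ℝ) ≤ D := by
        intro v _
        refine le_trans ?_ (hnbcard v)
        exact_mod_cast Set.ncard_image_le (hnbfin v)
      calc ∑ v ∈ hMfin.toFinset, (((fun u => s(u, v)) '' (G.neighborSet v)).ncard : ℝ)
          ≤ ∑ _v ∈ hMfin.toFinset, D := Finset.sum_le_sum hterm
        _ = (hMfin.toFinset.card : ℝ) * D := by rw [Finset.sum_const, nsmul_eq_mul]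
        _ = D * (M.ncard : ℝ) := by
            rw [Set.ncard_eq_toFinset_card M hMfin, mul_comm]
    -- set up constants
    obtain ⟨C, hCpos, hcont⟩ := h
    set c : ℝ := cheegerConstant G / D with hcdef
    have hcpos : 0 < c := div_pos hpos hD
    have hone : (1:ℝ) < 1 + c/2 := by linarith
    -- polynomial vs exponential
    obtain ⟨N, hN⟩ : ∃ N : ℕ, ∀ n : ℕ, N ≤ n → ((n:ℝ))^(d+1) ≤ (1+c/2)^n := by
      have hlo := isLittleO_pow_const_const_pow_of_one_lt (R := ℝ) (d+1) hone
      have hev := hlo.bound one_pos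
      rw [Filter.eventually_atTop] at hev
      obtain ⟨N, hN⟩ := hev
      refine ⟨N, fun n hn => ?_⟩
      have := hN n hn
      rw [Real.norm_eq_abs, Real.norm_eq_abs, abs_of_nonneg (by positivity),
        abs_of_nonneg (by positivity), one_mul] at this
      exact this
    set A : ℝ := max 1 (max ((2*C/c) * ((N:ℝ)+1)^(d+1)) (2*C*(1+c/2)/c)) with hAdef
    have hA1 : (1:ℝ) ≤ A := le_max_left _ _
    have hApos : (0:ℝ) < A := lt_of_lt_of_le one_pos hA1
    have hAkey : ∀ n : ℕ, C * ((n:ℝ)+1)^(d+1) ≤ (c/2) * ((1+c/2)^n * A) := by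
      intro n
      have hpowpos : (0:ℝ) < (1+c/2)^n := by positivity
      rcases le_or_gt N n with hn | hn
      · have h1 : ((n:ℝ)+1)^(d+1) ≤ (1+c/2)^(n+1) := by
          have := hN (n+1) (by omega)
          push_cast at this
          exact this
        have h2 : (2*C*(1+c/2)/c) ≤ A := le_trans (le_max_right _ _) (le_max_right _ _)
        have h3 : C * ((n:ℝ)+1)^(d+1) ≤ C * ((1+c/2) * (1+c/2)^n) := by
          rw [← pow_succ']
          exact mul_le_mul_of_nonneg_left h1 hCpos.le
        refine h3.trans ?_
        have h4 : 2*C*(1+c/2)/c * ((c/2) * (1+c/2)^n) = C * ((1+c/2) * (1+c/2)^n) := by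
          field_simp
        calc C * ((1+c/2) * (1+c/2)^n) = 2*C*(1+c/2)/c * ((c/2) * (1+c/2)^n) := h4.symm
          _ ≤ A * ((c/2) * (1+c/2)^n) := by
              apply mul_le_mul_of_nonneg_right h2 (by positivity)
          _ = (c/2) * ((1+c/2)^n * A) := by ring
      · have h1 : ((n:ℝ)+1)^(d+1) ≤ ((N:ℝ)+1)^(d+1) := by
          apply pow_le_pow_left₀ (by positivity)
          have : (n:ℝ) ≤ (N:ℝ) := by exact_mod_cast hn.le
          linarith
        have h2 : (2*C/c) * ((N:ℝ)+1)^(d+1) ≤ A := le_trans (le_max_left _ _) (le_max_right _ _)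
        have h3 : (1:ℝ) ≤ (1+c/2)^n := one_le_pow₀ (by linarith)
        have h5 : C * ((n:ℝ)+1)^(d+1) ≤ C * ((N:ℝ)+1)^(d+1) :=
          mul_le_mul_of_nonneg_left h1 hCpos.le
        refine h5.trans ?_
        have h6 : C * ((N:ℝ)+1)^(d+1) = (c/2) * ((2*C/c) * ((N:ℝ)+1)^(d+1)) := by
          field_simp
        rw [h6]
        apply mul_le_mul_of_nonneg_left _ (by positivity : (0:ℝ) ≤ c/2)
        calc (2*C/c) * ((N:ℝ)+1)^(d+1) ≤ A := h2
          _ = 1 * A := (one_mul A).symm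
          _ ≤ (1+c/2)^n * A := mul_le_mul_of_nonneg_right h3 hApos.le
    -- choose a large initial set
    obtain ⟨X₀, -, hX₀fin, hX₀card⟩ :=
      (Set.infinite_univ (α := Γ)).exists_subset_ncard_eq ⌈A⌉₊
    have hX₀A : A ≤ (X₀.ncard : ℝ) := by rw [hX₀card]; exact Nat.le_ceil A
    obtain ⟨W, X, hX0, hW, hXstep, hdisj, T, hTpos, hstab⟩ := hcont X₀ hX₀fin
    -- main induction: the fire grows exponentially
    have main : ∀ n : ℕ, (X n).Finite ∧ (1+c/2)^n * A ≤ ((X n).ncard : ℝ) := by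
      intro n
      induction n with
      | zero => rw [hX0]; exact ⟨hX₀fin, by simpa using hX₀A⟩
      | succ n ih =>
        obtain ⟨hfin, hcard⟩ := ih
        have hpowpos : (0:ℝ) < (1+c/2)^n * A := by positivity
        have hXne : (X n).Nonempty := by
          apply Set.nonempty_of_ncard_ne_zero
          intro h0'
          rw [h0'] at hcard
          norm_num at hcard
          linarith
        set U : Set Γ := ⋃ k ∈ Finset.Icc 1 (n+1), W k with hUdef
        have hUfin : U.Finite :=
          Set.Finite.biUnion (Finset.finite_toSet _)
            (fun k hk => (hW k (Finset.mem_Icc.mp hk).1).1)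
        have hUcard : ((U).ncard : ℝ) ≤ C * ((n:ℝ)+1)^(d+1) := by
          have h1 : (U.ncard : ℝ) ≤ ∑ k ∈ Finset.Icc 1 (n+1), ((W k).ncard : ℝ) := by
            have := aux_ncard_biUnion_le_sum (Finset.Icc 1 (n+1)) W
            push_cast
            exact_mod_cast this
          have h3 : ∑ k ∈ Finset.Icc 1 (n+1), ((W k).ncard : ℝ) ≤
              ∑ _k ∈ Finset.Icc 1 (n+1), C * ((n:ℝ)+1)^d := by
            apply Finset.sum_le_sum
            intro k hk
            obtain ⟨hk1, hk2⟩ := Finset.mem_Icc.mp hk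
            refine ((hW k hk1).2).trans ?_
            apply mul_le_mul_of_nonneg_left _ hCpos.le
            apply pow_le_pow_left₀ (by positivity)
            have : (k:ℝ) ≤ (n:ℝ)+1 := by exact_mod_cast hk2
            linarith
          have h4 : ∑ _k ∈ Finset.Icc 1 (n+1), C * ((n:ℝ)+1)^d
              = ((n:ℝ)+1) * (C * ((n:ℝ)+1)^d) := by
            rw [Finset.sum_const, Nat.card_Icc, nsmul_eq_mul]
            norm_num
          have h5 : ((n:ℝ)+1) * (C * ((n:ℝ)+1)^d) = C * ((n:ℝ)+1)^(d+1) := by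
            rw [pow_succ]; ring
          linarith
        -- expansion step
        have hexp := key (X n) hfin hXne
        have hMn : c * ((X n).ncard : ℝ) ≤ ((Nbd (X n) \ X n).ncard : ℝ) := by
          rw [hcdef, div_mul_eq_mul_div, div_le_iff₀ hD]
          linarith [hexp]
        have hXeq : X (n+1) = Nbd (X n) \ U := hXstep n
        have hfin1 : (X (n+1)).Finite := by
          rw [hXeq]
          exact ((hNbdfin _ hfin)).diff
        have hNbdsplit : (Nbd (X n) \ X n).ncard + (X n).ncard = (Nbd (X n)).ncard := by
          rw [Set.ncard_diff_add_ncard _ _ (hNbdfin _ hfin) hfin,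
            Set.union_eq_self_of_subset_right (hKsubNbd (X n))]
        have hsplitR : ((Nbd (X n) \ X n).ncard : ℝ) + ((X n).ncard : ℝ)
            = ((Nbd (X n)).ncard : ℝ) := by exact_mod_cast hNbdsplit
        have hdrop : ((Nbd (X n)).ncard : ℝ) ≤ ((X (n+1)).ncard : ℝ) + (U.ncard : ℝ) := by
          have hd := Set.ncard_le_ncard_diff_add_ncard (Nbd (X n)) U hUfin
          rw [← hXeq] at hd
          exact_mod_cast hd
        refine ⟨hfin1, ?_⟩
        have hA' := hAkey n
        have hmul : c * ((1+c/2)^n * A) ≤ c * ((X n).ncard : ℝ) :=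
          mul_le_mul_of_nonneg_left hcard hcpos.le
        have hgoal : (1+c/2)^(n+1) * A
            = (1+c/2)^n * A + (c/2) * ((1+c/2)^n * A) := by
          rw [pow_succ]; ring
        rw [hgoal]
        linarith
    -- final contradiction: the fire stabilizes but grows without bound
    have htends : Filter.Tendsto (fun n : ℕ => (1+c/2)^n * A) Filter.atTop Filter.atTop :=
      (tendsto_pow_atTop_atTop_of_one_lt hone).atTop_mul_const hApos
    obtain ⟨n, hn1, hn2⟩ : ∃ n : ℕ, T ≤ n ∧ ((X T).ncard : ℝ) < (1+c/2)^n * A := by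
      have hev := htends.eventually_gt_atTop ((X T).ncard : ℝ)
      rw [Filter.eventually_atTop] at hev
      obtain ⟨N', hN'⟩ := hev
      exact ⟨max T N', le_max_left _ _, hN' _ (le_max_right _ _)⟩
    have h2 := (main n).2
    rw [hstab n hn1] at h2
    linarith
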